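/- Let p ∈ (0,1) be transcendental over ℚ and q := 1 − p. Then every element of M_p has a unique representation: if b, b' : ℕ → {0,1} are finitely supported, not identically zero, and Σ_{i∈ℕ} b_i p q^{i−1} = Σ_{i∈ℕ} b'_i p q^{i−1}, then b_i = b'_i for all i ∈ ℕ. -/

import Mathlib

/-- For `p ∈ (0,1)` transcendental over ℚ and `q = 1 - p`, every element of
`M_p = { ∑_i b_i p q^(i-1) : b finitely supported 0-1 sequence, not identically zero }`
has a unique representation. Here the sequence is indexed by `i : ℕ` (shifting the
paper's index `i ∈ {1,2,...}` down by one, so the summand is `b i * p * q ^ i`). -/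
theorem unique_representation_of_transcendental
    (p q : ℝ) (hp0 : 0 < p) (hp1 : p < 1) (hptr : Transcendental ℚ p) (hq : q = 1 - p)
    (b b' : ℕ → ℕ)
    (hb01 : ∀ i, b i = 0 ∨ b i = 1) (hb'01 : ∀ i, b' i = 0 ∨ b' i = 1)
    (hbfin : (Function.support b).Finite) (hb'fin : (Function.support b').Finite)
    (hbne : ∃ i, b i = 1) (hb'ne : ∃ i, b' i = 1)
    (hsum : ∑' i : ℕ, (b i : ℝ) * (p * q ^ i) = ∑' i : ℕ, (b' i : ℝ) * (p * q ^ i)) :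
    ∀ i, b i = b' i := by
  classical
  -- q is transcendental over ℚ
  have hqtr : Transcendental ℚ q := by
    have h1 : (1 - Polynomial.X : Polynomial ℚ) = -(Polynomial.X - Polynomial.C 1) := by
      simp [neg_sub]
    have hdeg : (1 - Polynomial.X : Polynomial ℚ).natDegree = 1 := by
      rw [h1, Polynomial.natDegree_neg, Polynomial.natDegree_X_sub_C]
    have hlc : (1 - Polynomial.X : Polynomial ℚ).leadingCoeff ∈ nonZeroDivisors ℚ := by
      rw [h1, Polynomial.leadingCoeff_neg, Polynomial.leadingCoeff_X_sub_C]
      exact mem_nonZeroDivisors_of_ne_zero (by norm_num)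
    have := hptr.aeval (1 - Polynomial.X) (by rw [hdeg]; norm_num) hlc
    have h2 : (Polynomial.aeval p) (1 - Polynomial.X : Polynomial ℚ) = q := by
      simp [hq]
    rwa [h2] at this
  set s : Finset ℕ := hbfin.toFinset ∪ hb'fin.toFinset with hs
  have hsb : ∀ i ∉ s, b i = 0 := by
    intro i hi
    by_contra h
    exact hi (Finset.mem_union_left _ (hbfin.mem_toFinset.mpr h))
  have hsb' : ∀ i ∉ s, b' i = 0 := by
    intro i hi
    by_contra h
    exact hi (Finset.mem_union_right _ (hb'fin.mem_toFinset.mpr h))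
  have hts : ∑ i ∈ s, (b i : ℝ) * (p * q ^ i) = ∑ i ∈ s, (b' i : ℝ) * (p * q ^ i) := by
    rw [← tsum_eq_sum (L := SummationFilter.unconditional ℕ) (f := fun i => (b i : ℝ) * (p * q ^ i))
        (fun i hi => by simp [hsb i hi]),
      ← tsum_eq_sum (L := SummationFilter.unconditional ℕ) (f := fun i => (b' i : ℝ) * (p * q ^ i))
        (fun i hi => by simp [hsb' i hi])]
    exact hsum
  -- the integer-coefficient polynomial
  set P : Polynomial ℚ := ∑ i ∈ s, Polynomial.C ((b i : ℚ) - (b' i : ℚ)) * Polynomial.X ^ i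
    with hP
  have hev : Polynomial.aeval q P = 0 := by
    rw [hP]
    simp only [map_sum, map_mul, Polynomial.aeval_C, map_pow, Polynomial.aeval_X]
    have : ∑ i ∈ s, ((b i : ℝ) - (b' i : ℝ)) * q ^ i = 0 := by
      have hz := sub_eq_zero_of_eq hts
      rw [← Finset.sum_sub_distrib] at hz
      have hpne : p ≠ 0 := ne_of_gt hp0
      have h0 : p * ∑ i ∈ s, ((b i : ℝ) - (b' i : ℝ)) * q ^ i = 0 := by
        rw [Finset.mul_sum, ← hz]
        exact Finset.sum_congr rfl (fun i _ => by ring)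
      exact (mul_eq_zero.mp h0).resolve_left hpne
    calc ∑ i ∈ s, (algebraMap ℚ ℝ) ((b i : ℚ) - (b' i : ℚ)) * q ^ i
        = ∑ i ∈ s, ((b i : ℝ) - (b' i : ℝ)) * q ^ i := by
          apply Finset.sum_congr rfl; intro i _; push_cast; ring
      _ = 0 := this
  have hP0 : P = 0 := by
    by_contra h
    exact hqtr ⟨P, h, hev⟩
  -- extract coefficients
  intro i
  have hcoeff : P.coeff i = (b i : ℚ) - (b' i : ℚ) := by
    rw [hP, Polynomial.finset_sum_coeff]
    simp only [Polynomial.coeff_C_mul, Polynomial.coeff_X_pow]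
    by_cases hi : i ∈ s
    · rw [Finset.sum_eq_single i (fun j _ hj => by simp [Ne.symm hj]) (fun h => absurd hi h)]
      simp
    · rw [hsb i hi, hsb' i hi]
      simp only [Nat.cast_zero, sub_self, zero_mul]
      apply Finset.sum_eq_zero
      intro j hj
      rw [if_neg]
      · ring
      · rintro rfl; exact hi hj
  rw [hP0] at hcoeff
  simp only [Polynomial.coeff_zero] at hcoeff
  have : (b i : ℚ) = (b' i : ℚ) := by linarith [hcoeff.symm]
  exact_mod_cast this
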